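/- For all real numbers a > 0, θ > 0, and λ ≥ 0, the series Σ_{k=0}^{∞} Π_{j=1}^{k} λ/(a + j·θ) (with empty product equal to 1) converges, and its sum equals (a/θ)·∫_{0}^{1} e^{λ t/θ} (1−t)^{a/θ − 1} dt. (Integral representation used in equation (8) for the infinite-capacity reneging queue; in particular it gives 1/π^1_s with a = s·μ, θ = θ1 when n1 = ∞, and 1/π^2_{s+n1} with a = s·μ + n1·θ1, θ = θ2 when n2 = ∞.) -/

import Mathlib

open MeasureTheory Nat

lemma beta_eval (α : ℝ) (hα : 0 < α) (k : ℕ) :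
    ∫ t in Set.Ioo (0:ℝ) 1, t ^ k * (1 - t) ^ (α - 1) =
      (k ! : ℝ) / ∏ j ∈ Finset.range (k+1), (α + j) := by
  have h1 : ∫ t in Set.Ioo (0:ℝ) 1, t ^ k * (1 - t) ^ (α - 1)
      = ∫ t in (0:ℝ)..1, t ^ k * (1 - t) ^ (α - 1) := by
    rw [intervalIntegral.integral_of_le zero_le_one, integral_Ioc_eq_integral_Ioo]
  have h2 : Complex.betaIntegral ((k:ℂ)+1) (α:ℂ)
      = ((∫ t in (0:ℝ)..1, t ^ k * (1 - t) ^ (α - 1) : ℝ) : ℂ) := by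
    rw [Complex.betaIntegral, ← intervalIntegral.integral_ofReal]
    apply intervalIntegral.integral_congr
    intro x hx
    rw [Set.uIcc_of_le zero_le_one] at hx
    have hx1 : (0:ℝ) ≤ 1 - x := by linarith [hx.2]
    have : ((k:ℂ) + 1 - 1) = (k:ℂ) := by ring
    simp only [this, Complex.cpow_natCast]
    rw [show ((α:ℂ) - 1) = ((α - 1 : ℝ) : ℂ) by push_cast; ring,
      show ((1:ℂ) - (x:ℂ)) = ((1 - x : ℝ) : ℂ) by push_cast; ring,
      ← Complex.ofReal_cpow hx1]
    push_cast
    ring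
  have h3 : Complex.betaIntegral ((k:ℂ)+1) (α:ℂ)
      = (k ! : ℂ) / ∏ j ∈ Finset.range (k+1), ((α:ℂ) + j) := by
    rw [← Complex.betaIntegral_symm]
    exact Complex.betaIntegral_eval_nat_add_one_right (by simpa using hα) k
  rw [h1]
  have := h2.symm.trans h3
  rw [show ((k ! : ℂ) / ∏ j ∈ Finset.range (k+1), ((α:ℂ) + j))
      = (((k ! : ℝ) / ∏ j ∈ Finset.range (k+1), (α + j) : ℝ) : ℂ) by push_cast; ring] at this
  exact_mod_cast this

lemma prod_range_eq (α : ℝ) (k : ℕ) :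
    ∏ j ∈ Finset.range (k+1), (α + j) = α * ∏ j ∈ Finset.Icc 1 k, (α + j) := by
  induction k with
  | zero => simp
  | succ k ih =>
    rw [Finset.prod_range_succ, ih, Finset.prod_Icc_succ_top (by omega)]
    push_cast
    ring

theorem stmt_12 (a θ lam : ℝ) (ha : 0 < a) (hθ : 0 < θ) (hlam : 0 ≤ lam) :
    HasSum (fun k : ℕ => ∏ j ∈ Finset.Icc 1 k, lam / (a + (j : ℝ) * θ))
      (a / θ * ∫ t in Set.Ioo (0 : ℝ) 1, Real.exp (lam * t / θ) * (1 - t) ^ (a / θ - 1)) := by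
  set α := a / θ with hαdef
  have hα : 0 < α := div_pos ha hθ
  set c := lam / θ with hcdef
  have hc : 0 ≤ c := div_nonneg hlam hθ.le
  set F : ℕ → ℝ → ℝ := fun k t => c ^ k / k ! * (t ^ k * (1 - t) ^ (α - 1)) with hF
  -- integrability of (1-t)^(α-1)
  have h0 : IntervalIntegrable (fun x : ℝ => x ^ (α - 1)) volume 0 1 :=
    intervalIntegral.intervalIntegrable_rpow' (by linarith)
  have h1 := h0.comp_sub_left 1
  norm_num at h1
  have hint0 : IntegrableOn (fun t : ℝ => (1 - t) ^ (α - 1)) (Set.Ioo 0 1) :=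
    h1.2.mono_set Set.Ioo_subset_Ioc_self
  have hgm : ∀ k : ℕ, AEStronglyMeasurable (fun t : ℝ => t ^ k * (1 - t) ^ (α - 1))
      (volume.restrict (Set.Ioo (0:ℝ) 1)) := by
    intro k
    apply ContinuousOn.aestronglyMeasurable _ measurableSet_Ioo
    exact (continuousOn_pow k).mul (ContinuousOn.rpow_const
      ((continuous_const.sub continuous_id).continuousOn)
      (fun x hx => Or.inl (by simp only [Set.mem_Ioo] at hx; intro h; linarith [hx.2])))
  have hg_int : ∀ k : ℕ, IntegrableOn (fun t : ℝ => t ^ k * (1 - t) ^ (α - 1)) (Set.Ioo 0 1) := by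
    intro k
    apply MeasureTheory.Integrable.mono hint0 (hgm k)
    rw [ae_restrict_iff' measurableSet_Ioo]
    filter_upwards with t ht
    have h2 : (0:ℝ) < 1 - t := by linarith [ht.2]
    have h3 : (0:ℝ) < (1 - t) ^ (α - 1) := Real.rpow_pos_of_pos h2 _
    rw [Real.norm_of_nonneg (mul_nonneg (pow_nonneg ht.1.le k) h3.le), Real.norm_of_nonneg h3.le]
    calc t ^ k * (1 - t) ^ (α - 1) ≤ 1 * (1 - t) ^ (α - 1) :=
          mul_le_mul_of_nonneg_right (pow_le_one₀ ht.1.le ht.2.le) h3.le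
      _ = (1 - t) ^ (α - 1) := one_mul _
  have hFint : ∀ k : ℕ, Integrable (F k) (volume.restrict (Set.Ioo (0:ℝ) 1)) := fun k =>
    (hg_int k).const_mul _
  -- exact value of each integral
  have hIval : ∀ k : ℕ, ∫ t in Set.Ioo (0:ℝ) 1, F k t
      = c ^ k / k ! * ((k ! : ℝ) / ∏ j ∈ Finset.range (k+1), (α + j)) := by
    intro k
    rw [hF]
    rw [MeasureTheory.integral_const_mul, beta_eval α hα k]
  have hprodpos : ∀ k : ℕ, (0:ℝ) < ∏ j ∈ Finset.Icc 1 k, (α + j) := fun k =>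
    Finset.prod_pos fun j _ => by positivity
  -- norm integrals equal integrals
  have hnorm : ∀ k : ℕ, ∫ t in Set.Ioo (0:ℝ) 1, ‖F k t‖ = ∫ t in Set.Ioo (0:ℝ) 1, F k t := by
    intro k
    apply setIntegral_congr_fun measurableSet_Ioo
    intro t ht
    have h2 : (0:ℝ) < 1 - t := by linarith [ht.2]
    exact Real.norm_of_nonneg (mul_nonneg (by positivity)
      (mul_nonneg (pow_nonneg ht.1.le k) (Real.rpow_nonneg h2.le _)))
  -- summability
  have hFsum : Summable fun k : ℕ => ∫ t in Set.Ioo (0:ℝ) 1, ‖F k t‖ := by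
    apply Summable.of_nonneg_of_le
      (fun k => integral_nonneg fun t => norm_nonneg _)
      (fun k => ?_) ((Real.summable_pow_div_factorial c).mul_right (1/α))
    rw [hnorm k, hIval k]
    have hkfac : (0:ℝ) < (k ! : ℝ) := by positivity
    have hfac_le : (k ! : ℝ) ≤ ∏ j ∈ Finset.Icc 1 k, (α + j) := by
      calc (k ! : ℝ) = ∏ j ∈ Finset.Icc 1 k, (j : ℝ) := by
            rw [← Nat.cast_prod]
            congr 1
            rw [← Finset.Ico_add_one_right_eq_Icc]
            exact (Finset.prod_Ico_id_eq_factorial k).symm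
        _ ≤ ∏ j ∈ Finset.Icc 1 k, (α + j) := Finset.prod_le_prod
            (fun j hj => by positivity) (fun j hj => by linarith [hα])
    have h4 : (k ! : ℝ) / ∏ j ∈ Finset.range (k+1), (α + j) ≤ 1 / α := by
      rw [prod_range_eq]
      rw [div_le_div_iff₀ (by exact mul_pos hα (hprodpos k)) hα]
      have := hprodpos k
      nlinarith
    have h5 : (0:ℝ) ≤ c ^ k / k ! := by positivity
    calc c ^ k / k ! * ((k ! : ℝ) / ∏ j ∈ Finset.range (k+1), (α + j))
        ≤ c ^ k / k ! * (1 / α) := mul_le_mul_of_nonneg_left h4 h5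
      _ = c ^ k / k ! * (1 / α) := rfl
  -- interchange sum and integral
  have H := (MeasureTheory.hasSum_integral_of_summable_integral_norm hFint hFsum).mul_left α
  -- identify tsum with exponential
  have hval : ∫ t in Set.Ioo (0:ℝ) 1, ∑' k, F k t
      = ∫ t in Set.Ioo (0:ℝ) 1, Real.exp (lam * t / θ) * (1 - t) ^ (α - 1) := by
    apply setIntegral_congr_fun measurableSet_Ioo
    intro t ht
    have hs : HasSum (fun k => F k t) (Real.exp (c * t) * (1 - t) ^ (α - 1)) := by
      have h6 := (NormedSpace.expSeries_div_hasSum_exp (c * t)).mul_right ((1 - t) ^ (α - 1))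
      rw [← Real.exp_eq_exp_ℝ] at h6
      suffices hfun : (fun k => F k t) = fun i => (c * t) ^ i / (i ! : ℝ) * (1 - t) ^ (α - 1) by
        rw [hfun]; exact h6
      funext k
      rw [hF]
      simp only [mul_pow]
      ring
    have hct : lam * t / θ = c * t := by rw [hcdef]; ring
    show (∑' k, F k t) = Real.exp (lam * t / θ) * (1 - t) ^ (α - 1)
    rw [hs.tsum_eq, hct]
  -- termwise identification
  have hterm : ∀ k : ℕ, α * ∫ t in Set.Ioo (0:ℝ) 1, F k t
      = ∏ j ∈ Finset.Icc 1 k, lam / (a + (j:ℝ) * θ) := by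
    intro k
    rw [hIval k, prod_range_eq]
    have hP := hprodpos k
    have hkfac : (0:ℝ) < (k ! : ℝ) := by positivity
    have h7 : ∀ j ∈ Finset.Icc 1 k, lam / (a + (j:ℝ) * θ) = c / (α + j) := by
      intro j hj
      rw [hcdef, hαdef, div_div]
      congr 1
      field_simp
    rw [Finset.prod_congr rfl h7, Finset.prod_div_distrib, Finset.prod_const, Nat.card_Icc, Nat.add_sub_cancel]
    field_simp
  have H' : HasSum (fun k : ℕ => ∏ j ∈ Finset.Icc 1 k, lam / (a + (j:ℝ) * θ))
      (α * ∫ t in Set.Ioo (0:ℝ) 1, ∑' k, F k t) := by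
    simpa only [hterm] using H
  rw [hval] at H'
  exact H'
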